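/- For every α > 0, the negative cone satisfies C⁻(0,α) ⊂ ι(C⁺(0, α + ε₂√(αC))), where ι(p) = p⁻¹ = −p and C is the constant with |⟨Bx,ξ⟩| ≤ C|x||ξ|. -/
import Mathlib


open Matrix

/-- `⟨Bx,ξ⟩ ∈ ℝ^{m₂}`. -/
noncomputable def bvec {m₁ m₂ : ℕ} (B : Fin m₂ → Matrix (Fin m₁) (Fin m₁) ℝ)
    (x ξ : Fin m₁ → ℝ) : Fin m₂ → ℝ :=
  fun j => (B j).mulVec x ⬝ᵥ ξ

/-- The step-2 group law `(x,t) ⋆ (ξ,τ) = (x + ξ, t + τ + ½⟨Bx,ξ⟩)`. -/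
noncomputable def gmul {m₁ m₂ : ℕ} (B : Fin m₂ → Matrix (Fin m₁) (Fin m₁) ℝ)
    (p q : (Fin m₁ → ℝ) × (Fin m₂ → ℝ)) : (Fin m₁ → ℝ) × (Fin m₂ → ℝ) :=
  (p.1 + q.1, p.2 + q.2 + (1 / 2 : ℝ) • bvec B p.1 q.1)

/-- Euclidean norm on `ℝ^n`. -/
noncomputable def eunorm {n : ℕ} (x : Fin n → ℝ) : ℝ :=
  Real.sqrt (∑ i, x i ^ 2)

/-- Component of `x` along the horizontal direction `e₁`: `x^∥ = x₁e₁`. -/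
noncomputable def xpar {m : ℕ} (x : Fin (m + 1) → ℝ) : Fin (m + 1) → ℝ :=
  Pi.single 0 (x 0)

/-- Orthogonal component `x^⊥ = x - x^∥`. -/
noncomputable def xperp {m : ℕ} (x : Fin (m + 1) → ℝ) : Fin (m + 1) → ℝ :=
  x - xpar x

/-- The positive open cone `C⁺(0,α)` with vertex `0` and aperture `α`:
`max{|x^⊥|, ε₂|t − ½⟨Bx^⊥, x^∥⟩|^{1/2}} < α|x₁|` with `x₁ > 0`. -/
noncomputable def posCone {m m₂ : ℕ}
    (B : Fin m₂ → Matrix (Fin (m + 1)) (Fin (m + 1)) ℝ) (ε₂ α : ℝ) :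
    Set ((Fin (m + 1) → ℝ) × (Fin m₂ → ℝ)) :=
  {p | max (eunorm (xperp p.1))
        (ε₂ * Real.sqrt (eunorm (p.2 - (1 / 2 : ℝ) • bvec B (xperp p.1) (xpar p.1))))
      < α * |p.1 0| ∧ 0 < p.1 0}


/-- The negative open cone `C⁻(0,α)`: same condition with `x₁ < 0`. -/
noncomputable def negCone {m m₂ : ℕ}
    (B : Fin m₂ → Matrix (Fin (m + 1)) (Fin (m + 1)) ℝ) (ε₂ α : ℝ) :
    Set ((Fin (m + 1) → ℝ) × (Fin m₂ → ℝ)) :=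
  {p | max (eunorm (xperp p.1))
        (ε₂ * Real.sqrt (eunorm (p.2 - (1 / 2 : ℝ) • bvec B (xperp p.1) (xpar p.1))))
      < α * |p.1 0| ∧ p.1 0 < 0}

lemma eunorm_nonneg' {n : ℕ} (x : Fin n → ℝ) : 0 ≤ eunorm x := Real.sqrt_nonneg _

lemma eunorm_eq_norm' {n : ℕ} (x : Fin n → ℝ) :
    eunorm x = ‖(WithLp.equiv 2 (Fin n → ℝ)).symm x‖ := by
  rw [EuclideanSpace.norm_eq]
  simp [eunorm, sq_abs]

lemma eunorm_neg' {n : ℕ} (x : Fin n → ℝ) : eunorm (-x) = eunorm x := by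
  simp [eunorm, neg_sq]

lemma eunorm_add_le' {n : ℕ} (x y : Fin n → ℝ) : eunorm (x + y) ≤ eunorm x + eunorm y := by
  simp only [eunorm_eq_norm']
  simpa using norm_add_le ((WithLp.equiv 2 (Fin n → ℝ)).symm x)
    ((WithLp.equiv 2 (Fin n → ℝ)).symm y)

lemma sqrt_add_le' (a b : ℝ) (ha : 0 ≤ a) (hb : 0 ≤ b) :
    Real.sqrt (a + b) ≤ Real.sqrt a + Real.sqrt b := by
  have h1 := Real.sq_sqrt ha
  have h2 := Real.sq_sqrt hb
  have h3 := Real.sqrt_nonneg a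
  have h4 := Real.sqrt_nonneg b
  nlinarith [Real.sqrt_le_sqrt (show a + b ≤ (Real.sqrt a + Real.sqrt b)^2 by nlinarith),
    Real.sqrt_sq (by positivity : (0:ℝ) ≤ Real.sqrt a + Real.sqrt b)]

lemma xpar_neg' {m : ℕ} (x : Fin (m + 1) → ℝ) : xpar (-x) = -(xpar x) := by
  simp [xpar, Pi.single_neg]

lemma xperp_neg' {m : ℕ} (x : Fin (m + 1) → ℝ) : xperp (-x) = -(xperp x) := by
  simp [xperp, xpar_neg']
  abel

lemma bvec_neg_neg' {m₁ m₂ : ℕ} (B : Fin m₂ → Matrix (Fin m₁) (Fin m₁) ℝ)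
    (x ξ : Fin m₁ → ℝ) : bvec B (-x) (-ξ) = bvec B x ξ := by
  funext j
  simp [bvec, Matrix.mulVec_neg]

lemma eunorm_xpar' {m : ℕ} (x : Fin (m + 1) → ℝ) : eunorm (xpar x) = |x 0| := by
  have : ∑ i : Fin (m + 1), (xpar x) i ^ 2 = x 0 ^ 2 := by
    rw [Finset.sum_eq_single 0]
    · simp [xpar]
    · intro i _ hi; simp [xpar, Pi.single_apply, hi]
    · simp
  rw [eunorm, this, Real.sqrt_sq_eq_abs]

/-- For every `α > 0`, the negative cone satisfies
`C⁻(0,α) ⊂ ι(C⁺(0, α + ε₂√(αC)))`, where `ι(p) = p⁻¹ = -p` and `C` is the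
constant with `|⟨Bx,ξ⟩| ≤ C|x||ξ|`. -/
theorem stmt_14 (m m₂ : ℕ) (B : Fin m₂ → Matrix (Fin (m + 1)) (Fin (m + 1)) ℝ)
    (hB : ∀ j, (B j)ᵀ = -B j) (ε₂ : ℝ) (hε₂ : 0 < ε₂)
    (C : ℝ) (hC : 0 < C)
    (hCB : ∀ x ξ : Fin (m + 1) → ℝ, eunorm (bvec B x ξ) ≤ C * eunorm x * eunorm ξ)
    (α : ℝ) (hα : 0 < α) :
    negCone B ε₂ α ⊆ Neg.neg ⁻¹' posCone B ε₂ (α + ε₂ * Real.sqrt (α * C)) := by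
  rintro ⟨x, t⟩ ⟨hmax, hx0⟩
  set b : Fin m₂ → ℝ := bvec B (xperp x) (xpar x) with hb
  set a : Fin m₂ → ℝ := t - (1 / 2 : ℝ) • b with ha
  have hperp : eunorm (xperp x) < α * |x 0| := lt_of_le_of_lt (le_max_left _ _) hmax
  have hta : ε₂ * Real.sqrt (eunorm a) < α * |x 0| := lt_of_le_of_lt (le_max_right _ _) hmax
  simp only [Set.mem_preimage, posCone, Set.mem_setOf_eq, Prod.fst_neg, Prod.snd_neg,
    Pi.neg_apply, xperp_neg', xpar_neg', bvec_neg_neg', eunorm_neg']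
  have habs : |(-x) 0| = |x 0| := by simp
  refine ⟨?_, by simpa using hx0⟩
  have hkey : -t - (1 / 2 : ℝ) • b = -(a + b) := by
    rw [ha]; module
  have hx0abs : (0:ℝ) ≤ |x 0| := abs_nonneg _
  have hbound : eunorm b ≤ C * (α * |x 0|) * |x 0| := by
    calc eunorm b ≤ C * eunorm (xperp x) * eunorm (xpar x) := hCB _ _
    _ ≤ C * (α * |x 0|) * |x 0| := by
        rw [eunorm_xpar']
        have h2 := mul_le_mul_of_nonneg_left
          (mul_le_mul_of_nonneg_right hperp.le hx0abs) hC.le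
        linarith [h2]
  have hsb : Real.sqrt (eunorm b) ≤ Real.sqrt (α * C) * |x 0| := by
    calc Real.sqrt (eunorm b) ≤ Real.sqrt (α * C * |x 0| ^ 2) := by
          apply Real.sqrt_le_sqrt; nlinarith
    _ = Real.sqrt (α * C) * |x 0| := by
          rw [Real.sqrt_mul (by positivity), Real.sqrt_sq_eq_abs, abs_abs]
  have hmain : ε₂ * Real.sqrt (eunorm (-t - (1 / 2 : ℝ) • b))
      < (α + ε₂ * Real.sqrt (α * C)) * |x 0| := by
    rw [hkey, eunorm_neg']
    have h1 : Real.sqrt (eunorm (a + b)) ≤ Real.sqrt (eunorm a) + Real.sqrt (eunorm b) := by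
      calc Real.sqrt (eunorm (a + b)) ≤ Real.sqrt (eunorm a + eunorm b) :=
            Real.sqrt_le_sqrt (eunorm_add_le' _ _)
      _ ≤ Real.sqrt (eunorm a) + Real.sqrt (eunorm b) :=
            sqrt_add_le' _ _ (eunorm_nonneg' _) (eunorm_nonneg' _)
    nlinarith [Real.sqrt_nonneg (eunorm b), Real.sqrt_nonneg (eunorm a)]
  rw [max_lt_iff, abs_neg]
  constructor
  · have h0 : 0 ≤ ε₂ * Real.sqrt (α * C) * |x 0| := by positivity
    nlinarith
  · exact hmain
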